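/- Conversely, let {u_ℓ}_{ℓ=1}^N be an orthonormal basis of ℂ^N and a, b^{(1)},…,b^{(r)} real-valued functions on {1,…,N}. If for all f ∈ ℂ^N one has ‖f‖² = Σ_u |⟨f, φ_u⟩|² + Σ_{n,u} |⟨f, ψ^{(n)}_u⟩|² with φ_u, ψ^{(n)}_u the filtered kernels as above, then |a(ℓ)|² + Σ_{n=1}^r |b^{(n)}(ℓ)|² = 1 for every ℓ = 1,…,N. -/

import Mathlib

lemma inner_kernel_aux (N : ℕ) (uB : Fin N → Fin N → ℂ)
    (horth : ∀ ℓ ℓ' : Fin N,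
      ∑ v, uB ℓ v * (starRingEnd ℂ) (uB ℓ' v) = if ℓ = ℓ' then 1 else 0)
    (c : Fin N → ℝ) (ℓ u : Fin N) :
    ∑ v, uB ℓ v * (starRingEnd ℂ)
      (∑ ℓ', (c ℓ' : ℂ) * (starRingEnd ℂ) (uB ℓ' u) * uB ℓ' v)
      = (c ℓ : ℂ) * uB ℓ u := by
  have : ∀ v, uB ℓ v * (starRingEnd ℂ)
      (∑ ℓ', (c ℓ' : ℂ) * (starRingEnd ℂ) (uB ℓ' u) * uB ℓ' v)
      = ∑ ℓ', (c ℓ' : ℂ) * uB ℓ' u * (uB ℓ v * (starRingEnd ℂ) (uB ℓ' v)) := by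
    intro v
    simp only [map_sum, map_mul, Complex.conj_conj, Complex.conj_ofReal, Finset.mul_sum]
    exact Finset.sum_congr rfl fun ℓ' _ => by ring
  simp only [this]
  rw [Finset.sum_comm]
  have : ∀ ℓ' : Fin N, ∑ v, ((c ℓ' : ℂ) * uB ℓ' u * (uB ℓ v * (starRingEnd ℂ) (uB ℓ' v)))
      = (c ℓ' : ℂ) * uB ℓ' u * (if ℓ = ℓ' then 1 else 0) := by
    intro ℓ'; rw [← Finset.mul_sum, horth]
  simp [this]

/-- Converse of the one-level tightness: if the filtered-kernel framelet system built
from real filter values `a, b^{(1)},…,b^{(r)}` and an orthonormal basis `{u_ℓ}` of `ℂ^N`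
is a tight frame, then `|a ℓ|² + ∑ n, |b n ℓ|² = 1` for every `ℓ`. -/
theorem filter_identity_of_framelet_tight_frame
    (N r : ℕ) (uB : Fin N → Fin N → ℂ)
    (horth : ∀ ℓ ℓ' : Fin N,
      ∑ v, uB ℓ v * (starRingEnd ℂ) (uB ℓ' v) = if ℓ = ℓ' then 1 else 0)
    (a : Fin N → ℝ) (b : Fin r → Fin N → ℝ)
    (φ : Fin N → Fin N → ℂ)
    (hφ : ∀ u v, φ u v = ∑ ℓ, (a ℓ : ℂ) * (starRingEnd ℂ) (uB ℓ u) * uB ℓ v)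
    (ψ : Fin r → Fin N → Fin N → ℂ)
    (hψ : ∀ n u v, ψ n u v = ∑ ℓ, (b n ℓ : ℂ) * (starRingEnd ℂ) (uB ℓ u) * uB ℓ v)
    (htight : ∀ f : Fin N → ℂ,
      ∑ v, ‖f v‖ ^ 2
        = (∑ u, ‖∑ v, f v * (starRingEnd ℂ) (φ u v)‖ ^ 2)
          + ∑ n, ∑ u, ‖∑ v, f v * (starRingEnd ℂ) (ψ n u v)‖ ^ 2) :
    ∀ ℓ : Fin N, (a ℓ) ^ 2 + ∑ n, (b n ℓ) ^ 2 = 1 := by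
  intro ℓ
  have hnorm : ∑ u, ‖uB ℓ u‖ ^ 2 = 1 := by
    have h := horth ℓ ℓ
    simp only [if_pos rfl] at h
    have : ∑ v, uB ℓ v * (starRingEnd ℂ) (uB ℓ v) = ((∑ v, ‖uB ℓ v‖ ^ 2 : ℝ) : ℂ) := by
      push_cast
      exact Finset.sum_congr rfl fun v _ => by
        rw [Complex.mul_conj]; simp [Complex.normSq_eq_norm_sq]
    rw [this] at h
    simp only [if_true] at h
    exact_mod_cast h
  have h := htight (uB ℓ)
  have hφ' : ∀ u, ∑ v, uB ℓ v * (starRingEnd ℂ) (φ u v) = (a ℓ : ℂ) * uB ℓ u := by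
    intro u
    simp only [hφ]
    exact inner_kernel_aux N uB horth a ℓ u
  have hψ' : ∀ n u, ∑ v, uB ℓ v * (starRingEnd ℂ) (ψ n u v) = (b n ℓ : ℂ) * uB ℓ u := by
    intro n u
    simp only [hψ]
    exact inner_kernel_aux N uB horth (b n) ℓ u
  simp only [hφ', hψ', norm_mul, mul_pow, Complex.norm_real] at h
  rw [← Finset.mul_sum, hnorm] at h
  have h2 : ∀ n : Fin r, ∑ u, ‖(b n ℓ : ℝ)‖ ^ 2 * ‖uB ℓ u‖ ^ 2 = ‖(b n ℓ : ℝ)‖ ^ 2 := by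
    intro n; rw [← Finset.mul_sum, hnorm, mul_one]
  simp only [h2, mul_one, hnorm] at h
  simp only [Real.norm_eq_abs, sq_abs] at h
  linarith
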